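/- Let τ = U_1 + ⋯ + U_n be a sum of n independent {0,1}-valued (Bernoulli) random variables with success probabilities p_1,…,p_n ∈ [0,1]. Then the probability mass function (P(τ = k))_{k=0}^n is ultra log-concave of order n, i.e. (P(τ=k)/C(n,k))² ≥ (P(τ=k−1)/C(n,k−1)) · (P(τ=k+1)/C(n,k+1)) for k = 1,…,n−1. -/

import Mathlib

open MeasureTheory ProbabilityTheory

lemma ulc_step (m : ℕ) (p q : ℝ) (hp : 0 ≤ p) (hq : 0 ≤ q) (α : ℕ → ℝ)
    (hα : ∀ j, 0 ≤ α j) (hαtop : ∀ j, m < j → α j = 0)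
    (hULC : ∀ j, 1 ≤ j → j + 1 ≤ m → α (j-1) * α (j+1) ≤ α j ^ 2)
    (hint : ∀ a b c, a ≤ b → b ≤ c → 0 < α a → 0 < α c → 0 < α b)
    (k : ℕ) (hk1 : 1 ≤ k) (hk2 : k ≤ m) :
    (q * α (k-1) * ((m+1-(k-1) : ℕ) : ℝ) + p * α (k-1-1) * ((k-1 : ℕ) : ℝ)) *
      (q * α (k+1) * ((m+1-(k+1) : ℕ) : ℝ) + p * α k * ((k+1 : ℕ) : ℝ)) ≤
    (q * α k * ((m+1-k : ℕ) : ℝ) + p * α (k-1) * ((k : ℕ) : ℝ)) ^ 2 := by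
  set A := α (k-1-1) with hA
  set B := α (k-1) with hB
  set Cv := α k with hC
  set D := α (k+1) with hD
  have hA0 : 0 ≤ A := hα _
  have hB0 : 0 ≤ B := hα _
  have hC0 : 0 ≤ Cv := hα _
  have hD0 : 0 ≤ D := hα _
  have e1 : ((m+1-(k-1) : ℕ) : ℝ) = (m:ℝ) - k + 2 := by
    rw [show m+1-(k-1) = m+2-k by omega, Nat.cast_sub (by omega)]; push_cast; ring
  have e2 : ((m+1-(k+1) : ℕ) : ℝ) = (m:ℝ) - k := by
    rw [show m+1-(k+1) = m-k by omega, Nat.cast_sub (by omega)]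
  have e3 : ((m+1-k : ℕ) : ℝ) = (m:ℝ) - k + 1 := by
    rw [Nat.cast_sub (by omega)]; push_cast; ring
  have e4 : ((k-1 : ℕ) : ℝ) = (k:ℝ) - 1 := by
    rw [Nat.cast_sub (by omega)]; push_cast; ring
  have e5 : ((k+1 : ℕ) : ℝ) = (k:ℝ) + 1 := by push_cast; ring
  rw [e1, e2, e3, e4, e5]
  set K := (k:ℝ) with hK
  set M := (m:ℝ) with hM
  have hK1 : 1 ≤ K := by rw [hK]; exact_mod_cast hk1
  have hMK : K ≤ M := by rw [hK, hM]; exact_mod_cast hk2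
  have hBD : B * D ≤ Cv ^ 2 := by
    rcases eq_or_lt_of_le hk2 with h | h
    · have hD' : D = 0 := hαtop _ (by omega)
      rw [hD']; simpa using sq_nonneg Cv
    · exact hULC k hk1 (by omega)
  have hACv : 2 ≤ k → A * Cv ≤ B ^ 2 := by
    intro h
    have := hULC (k-1) (by omega) (by omega)
    rwa [show k - 1 + 1 = k by omega] at this
  have hACv' : (K - 1) * (A * Cv) ≤ (K - 1) * B ^ 2 := by
    rcases Nat.lt_or_ge k 2 with h | h
    · have hk : k = 1 := by omega
      have : K = 1 := by rw [hK, hk]; norm_num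
      rw [this]; ring_nf; rfl
    · exact mul_le_mul_of_nonneg_left (hACv h)
        (by have h2K : (2:ℝ) ≤ K := by { rw [hK]; exact_mod_cast h }; linarith)
  have hAD' : (K - 1) * (A * D) ≤ (K - 1) * (B * Cv) := by
    rcases Nat.lt_or_ge k 2 with h | h
    · have hk : k = 1 := by omega
      have : K = 1 := by rw [hK, hk]; norm_num
      rw [this]; ring_nf; rfl
    · refine mul_le_mul_of_nonneg_left ?_
        (by have h2K : (2:ℝ) ≤ K := by { rw [hK]; exact_mod_cast h }; linarith)
      rcases eq_or_lt_of_le (mul_nonneg hB0 hC0) with hBC | hBC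
      · have hAD0 : A * D = 0 := by
          by_contra hne
          have hApos : 0 < A := lt_of_le_of_ne hA0 fun h0 => hne (by rw [← h0, zero_mul])
          have hDpos : 0 < D := lt_of_le_of_ne hD0 fun h0 => hne (by rw [← h0, mul_zero])
          have hBpos : 0 < B := hint (k-1-1) (k-1) (k+1) (by omega) (by omega) hApos hDpos
          have hCpos : 0 < Cv := hint (k-1-1) k (k+1) (by omega) (by omega) hApos hDpos
          nlinarith
        rw [hAD0, ← hBC]
      · have hprod : (A * Cv) * (B * D) ≤ B ^ 2 * Cv ^ 2 :=
          mul_le_mul (hACv h) hBD (mul_nonneg hB0 hD0) (sq_nonneg B)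
        have : (A * D) * (B * Cv) ≤ (B * Cv) * (B * Cv) := by nlinarith
        exact le_of_mul_le_mul_right this hBC
  have h1' : q^2 * ((M - K + 2) * (M - K)) * (B * D) ≤ q^2 * ((M - K + 2) * (M - K)) * Cv ^ 2 :=
    mul_le_mul_of_nonneg_left hBD
      (mul_nonneg (sq_nonneg q) (mul_nonneg (by linarith) (by linarith)))
  have h2' : (K + 1) * p^2 * ((K - 1) * (A * Cv)) ≤ (K + 1) * p^2 * ((K - 1) * B ^ 2) :=
    mul_le_mul_of_nonneg_left hACv' (mul_nonneg (by linarith) (sq_nonneg p))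
  have h3' : p * q * (M - K) * ((K - 1) * (A * D)) ≤ p * q * (M - K) * ((K - 1) * (B * Cv)) :=
    mul_le_mul_of_nonneg_left hAD' (mul_nonneg (mul_nonneg hp hq) (by linarith))
  linarith [h1', h2', h3', sq_nonneg (q * Cv - p * B)]

/-- Abstract induction: a family `f s : ℕ → ℝ` satisfying the Bernoulli convolution
recursion has interval support and is ultra log-concave of order `s.card`. -/
lemma ulc_rec {ι : Type*} [DecidableEq ι] (f : Finset ι → ℕ → ℝ) (p q : ι → ℝ)
    (hp : ∀ i, 0 ≤ p i) (hq : ∀ i, 0 ≤ q i)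
    (hf0 : ∀ s k, 0 ≤ f s k)
    (hftop : ∀ (s : Finset ι) k, s.card < k → f s k = 0)
    (hbase : ∀ k, 0 < f ∅ k → k = 0)
    (hrec0 : ∀ a s, a ∉ s → f (insert a s) 0 = q a * f s 0)
    (hrec : ∀ a s, a ∉ s → ∀ k, f (insert a s) (k+1) = q a * f s (k+1) + p a * f s k) :
    ∀ s : Finset ι,
      (∀ x y z, x ≤ y → y ≤ z → 0 < f s x → 0 < f s z → 0 < f s y) ∧
      (∀ k, 1 ≤ k → k + 1 ≤ s.card →
        f s (k-1) / (s.card.choose (k-1) : ℝ) * (f s (k+1) / (s.card.choose (k+1) : ℝ)) ≤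
          (f s k / (s.card.choose k : ℝ)) ^ 2) := by
  intro s
  induction s using Finset.induction_on with
  | empty =>
    constructor
    · intro x y z hxy hyz hx hz
      have hx0 := hbase x hx
      have hz0 := hbase z hz
      have : y = x := by omega
      rwa [this]
    · intro k hk1 hk2
      simp at hk2
  | insert a s ha ih =>
    obtain ⟨hintS, hulcS⟩ := ih
    set m := s.card with hm
    have hcard : (insert a s).card = m + 1 := Finset.card_insert_of_notMem ha
    have hrec' : ∀ k, 1 ≤ k → f (insert a s) k = q a * f s k + p a * f s (k-1) := by
      intro k hk
      have := hrec a s ha (k-1)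
      rwa [show k - 1 + 1 = k by omega] at this
    have hposc : ∀ k, 0 < f (insert a s) k →
        0 < q a * f s k ∨ (1 ≤ k ∧ 0 < p a * f s (k-1)) := by
      intro k hk
      cases k with
      | zero => left; rwa [hrec0 a s ha] at hk
      | succ t =>
        rw [hrec a s ha t] at hk
        rcases lt_or_ge 0 (q a * f s (t+1)) with h | h
        · exact Or.inl h
        · right
          refine ⟨by omega, ?_⟩
          simp only [Nat.add_sub_cancel]
          linarith
    have hposI : ∀ k, 0 < q a * f s k → 0 < f (insert a s) k := by
      intro k hk
      cases k with
      | zero => rwa [hrec0 a s ha]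
      | succ t =>
        rw [hrec a s ha t]
        have := mul_nonneg (hp a) (hf0 s t)
        linarith
    have hposI' : ∀ k, 1 ≤ k → 0 < p a * f s (k-1) → 0 < f (insert a s) k := by
      intro k hk h
      rw [hrec' k hk]
      have := mul_nonneg (hq a) (hf0 s k)
      linarith
    have hqpos : ∀ k, 0 < q a * f s k → 0 < q a ∧ 0 < f s k := by
      intro k h
      rcases mul_pos_iff.mp h with ⟨h1, h2⟩ | ⟨h1, h2⟩
      · exact ⟨h1, h2⟩
      · exact absurd h1 (not_lt.mpr (hq a))
    have hppos : ∀ k, 0 < p a * f s k → 0 < p a ∧ 0 < f s k := by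
      intro k h
      rcases mul_pos_iff.mp h with ⟨h1, h2⟩ | ⟨h1, h2⟩
      · exact ⟨h1, h2⟩
      · exact absurd h1 (not_lt.mpr (hp a))
    have hINT : ∀ x y z, x ≤ y → y ≤ z →
        0 < f (insert a s) x → 0 < f (insert a s) z → 0 < f (insert a s) y := by
      intro x y z hxy hyz hx hz
      rcases hposc x hx with hx1 | ⟨hx0, hx2⟩ <;> rcases hposc z hz with hz1 | ⟨hz0, hz2⟩
      · obtain ⟨hqa, hfx⟩ := hqpos _ hx1
        obtain ⟨-, hfz⟩ := hqpos _ hz1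
        exact hposI y (mul_pos hqa (hintS x y z hxy hyz hfx hfz))
      · obtain ⟨hqa, hfx⟩ := hqpos _ hx1
        obtain ⟨hpa, hfz1⟩ := hppos _ hz2
        rcases eq_or_lt_of_le hyz with h | h
        · rwa [h]
        · have hfy : 0 < f s y := hintS x y (z-1) hxy (by omega) hfx hfz1
          exact hposI y (mul_pos hqa hfy)
      · obtain ⟨hpa, hfx1⟩ := hppos _ hx2
        obtain ⟨hqa, hfz⟩ := hqpos _ hz1
        have hfy1 : 0 < f s (y-1) := hintS (x-1) (y-1) z (by omega) (by omega) hfx1 hfz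
        exact hposI' y (by omega) (mul_pos hpa hfy1)
      · obtain ⟨hpa, hfx1⟩ := hppos _ hx2
        obtain ⟨-, hfz1⟩ := hppos _ hz2
        have hfy1 : 0 < f s (y-1) := hintS (x-1) (y-1) (z-1) (by omega) (by omega) hfx1 hfz1
        exact hposI' y (by omega) (mul_pos hpa hfy1)
    refine ⟨hINT, ?_⟩
    intro k hk1 hk2
    rw [hcard] at hk2 ⊢
    have hk2' : k ≤ m := by omega
    set α : ℕ → ℝ := fun j => f s j / (m.choose j : ℝ) with hαdef
    have hα : ∀ j, 0 ≤ α j := fun j => div_nonneg (hf0 s j) (Nat.cast_nonneg _)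
    have hαtop : ∀ j, m < j → α j = 0 := by
      intro j hj
      simp only [hαdef]
      rw [hftop s j hj, zero_div]
    have hULCα : ∀ j, 1 ≤ j → j + 1 ≤ m → α (j-1) * α (j+1) ≤ α j ^ 2 := by
      intro j hj1 hj2
      exact hulcS j hj1 hj2
    have hfpos_of_αpos : ∀ j, 0 < α j → 0 < f s j ∧ j ≤ m := by
      intro j hj
      constructor
      · by_contra h
        push_neg at h
        have : α j ≤ 0 := div_nonpos_of_nonpos_of_nonneg h (Nat.cast_nonneg _)
        linarith
      · by_contra h
        push_neg at h
        rw [hαtop j h] at hj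
        exact lt_irrefl 0 hj
    have hintα : ∀ x y z, x ≤ y → y ≤ z → 0 < α x → 0 < α z → 0 < α y := by
      intro x y z hxy hyz hx hz
      obtain ⟨hfx, -⟩ := hfpos_of_αpos x hx
      obtain ⟨hfz, hzm⟩ := hfpos_of_αpos z hz
      have hfy : 0 < f s y := hintS x y z hxy hyz hfx hfz
      exact div_pos hfy (by exact_mod_cast Nat.choose_pos (le_trans hyz hzm))
    have hfeq : ∀ j, f s j = α j * (m.choose j : ℝ) := by
      intro j
      rcases le_or_gt j m with h | h
      · rw [hαdef]
        exact (div_mul_cancel₀ _ (by exact_mod_cast (Nat.choose_pos h).ne')).symm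
      · rw [hftop s j h, Nat.choose_eq_zero_of_lt h]
        simp
    have hbeta : ∀ j, j ≤ m + 1 →
        f (insert a s) j / (((m+1).choose j : ℕ) : ℝ) * ((m:ℝ)+1) =
          q a * α j * ((m+1-j : ℕ) : ℝ) + p a * α (j-1) * ((j : ℕ) : ℝ) := by
      intro j hj
      cases j with
      | zero =>
        rw [hrec0 a s ha]
        simp only [Nat.choose_zero_right, Nat.cast_one, Nat.sub_zero, Nat.cast_zero, mul_zero,
          Nat.zero_eq, Nat.cast_ofNat, add_zero]
        rw [hαdef]
        simp only [Nat.choose_zero_right, Nat.cast_one]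
        push_cast
        ring
      | succ t =>
        have htm : t ≤ m := by omega
        have hCpos : (0:ℝ) < (((m+1).choose (t+1) : ℕ) : ℝ) := by
          exact_mod_cast Nat.choose_pos (by omega : t+1 ≤ m+1)
        have r1 : ((m:ℝ)+1) * (m.choose t : ℝ) = (((m+1).choose (t+1) : ℕ) : ℝ) * ((t:ℝ)+1) := by
          exact_mod_cast Nat.add_one_mul_choose_eq m t
        have rc : (((m+1).choose (t+1) : ℕ) : ℝ) = (m.choose t : ℝ) + (m.choose (t+1) : ℝ) := by
          exact_mod_cast Nat.choose_succ_succ (m) (t)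
        have r2 : ((m:ℝ)+1) * (m.choose (t+1) : ℝ) = ((m:ℝ) - t) * (((m+1).choose (t+1) : ℕ) : ℝ) := by
          linear_combination (-(m:ℝ)-1) * rc - r1
        have ecast : ((m+1-(t+1) : ℕ) : ℝ) = (m:ℝ) - t := by
          rw [show m+1-(t+1) = m - t by omega, Nat.cast_sub htm]
        rw [hrec a s ha t, hfeq (t+1), hfeq t, ecast]
        simp only [Nat.add_sub_cancel]
        rw [div_mul_eq_mul_div, div_eq_iff (ne_of_gt hCpos)]
        push_cast
        linear_combination q a * α (t+1) * r2 + p a * α t * r1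
    have H := ulc_step m (p a) (q a) (hp a) (hq a) α hα hαtop hULCα hintα k hk1 hk2'
    have hb3 := hbeta (k+1) (by omega)
    simp only [Nat.add_sub_cancel] at hb3
    rw [← hbeta (k-1) (by omega), ← hbeta k (by omega), ← hb3] at H
    have hM1 : (0:ℝ) < (m:ℝ) + 1 := by have := (Nat.cast_nonneg m : (0:ℝ) ≤ m); linarith
    have H2 : f (insert a s) (k-1) / (((m+1).choose (k-1) : ℕ) : ℝ) *
          (f (insert a s) (k+1) / (((m+1).choose (k+1) : ℕ) : ℝ)) * (((m:ℝ)+1)^2) ≤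
        (f (insert a s) k / (((m+1).choose k : ℕ) : ℝ)) ^ 2 * (((m:ℝ)+1)^2) := by
      nlinarith [H]
    exact le_of_mul_le_mul_right H2 (pow_pos hM1 2)

theorem stmt7 {Ω : Type*} [MeasurableSpace Ω] (μ : Measure Ω) [IsProbabilityMeasure μ]
    {n : ℕ} (U : Fin n → Ω → ℕ) (hUmeas : ∀ i, Measurable (U i))
    (hU01 : ∀ i ω, U i ω ≤ 1)
    (hUindep : iIndepFun U μ) :
    ∀ k : ℕ, 1 ≤ k → k + 1 ≤ n →
      ((μ {ω | (∑ i, U i ω) = k - 1}).toReal / (n.choose (k - 1))) *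
        ((μ {ω | (∑ i, U i ω) = k + 1}).toReal / (n.choose (k + 1))) ≤
      ((μ {ω | (∑ i, U i ω) = k}).toReal / (n.choose k)) ^ 2 := by
  intro k hk1 hk2
  -- the pmf of partial sums
  set f : Finset (Fin n) → ℕ → ℝ :=
    fun s k => (μ {ω | ∑ i ∈ s, U i ω = k}).toReal with hfdef
  set p : Fin n → ℝ := fun i => (μ {ω | U i ω = 1}).toReal with hpdef
  set q : Fin n → ℝ := fun i => (μ {ω | U i ω = 0}).toReal with hqdef
  have hp : ∀ i, 0 ≤ p i := fun i => ENNReal.toReal_nonneg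
  have hq : ∀ i, 0 ≤ q i := fun i => ENNReal.toReal_nonneg
  have hf0 : ∀ s k, 0 ≤ f s k := fun s k => ENNReal.toReal_nonneg
  have hftop : ∀ (s : Finset (Fin n)) k, s.card < k → f s k = 0 := by
    intro s k hk
    have hempty : {ω | ∑ i ∈ s, U i ω = k} = ∅ := by
      ext ω
      simp only [Set.mem_setOf_eq, Set.mem_empty_iff_false, iff_false]
      intro h
      have hle : ∑ i ∈ s, U i ω ≤ ∑ i ∈ s, 1 :=
        Finset.sum_le_sum fun i _ => hU01 i ω
      rw [Finset.sum_const, smul_eq_mul, mul_one] at hle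
      omega
    rw [hfdef]
    simp [hempty]
  have hbase : ∀ k, 0 < f ∅ k → k = 0 := by
    intro k hk
    by_contra h
    have hempty : {ω | ∑ i ∈ (∅ : Finset (Fin n)), U i ω = k} = ∅ := by
      ext ω
      simp only [Finset.sum_empty, Set.mem_setOf_eq, Set.mem_empty_iff_false, iff_false]
      omega
    rw [hfdef] at hk
    simp only [hempty, measure_empty, ENNReal.toReal_zero] at hk
    exact lt_irrefl 0 hk
  -- recursion
  have hTmeas : ∀ s : Finset (Fin n), Measurable (∑ i ∈ s, U i) := by
    intro s
    rw [show (∑ i ∈ s, U i) = fun ω => ∑ i ∈ s, U i ω from funext fun ω => Finset.sum_apply ..]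
    exact Finset.measurable_sum s fun i _ => hUmeas i
  have hmul : ∀ (s : Finset (Fin n)) (a : Fin n), a ∉ s → ∀ c d : ℕ,
      μ ((∑ i ∈ s, U i) ⁻¹' {c} ∩ U a ⁻¹' {d})
      = μ ((∑ i ∈ s, U i) ⁻¹' {c}) * μ (U a ⁻¹' {d}) := by
    intro s a ha c d
    exact (hUindep.indepFun_finset_sum_of_notMem hUmeas ha).measure_inter_preimage_eq_mul
      _ _ (measurableSet_singleton c) (measurableSet_singleton d)
  have hseteq : ∀ (s : Finset (Fin n)) (c : ℕ),
      {ω | ∑ i ∈ s, U i ω = c} = (∑ i ∈ s, U i) ⁻¹' {c} := by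
    intro s c; ext ω; simp [Finset.sum_apply]
  have hrec0 : ∀ a s, a ∉ s → f (insert a s) 0 = q a * f s 0 := by
    intro a s ha
    have hset : {ω | ∑ i ∈ insert a s, U i ω = 0}
        = (∑ i ∈ s, U i) ⁻¹' {0} ∩ U a ⁻¹' {0} := by
      ext ω
      have h01 := hU01 a ω
      simp only [Finset.sum_insert ha, Set.mem_setOf_eq, Set.mem_inter_iff,
        Set.mem_preimage, Set.mem_singleton_iff, Finset.sum_apply]
      omega
    rw [hfdef, hqdef]
    simp only
    rw [hset, hmul s a ha 0 0, ENNReal.toReal_mul, ← hseteq, mul_comm]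
    rfl
  have hrec : ∀ a s, a ∉ s → ∀ k, f (insert a s) (k+1) = q a * f s (k+1) + p a * f s k := by
    intro a s ha k
    have hset : {ω | ∑ i ∈ insert a s, U i ω = k + 1}
        = ((∑ i ∈ s, U i) ⁻¹' {k+1} ∩ U a ⁻¹' {0}) ∪ ((∑ i ∈ s, U i) ⁻¹' {k} ∩ U a ⁻¹' {1}) := by
      ext ω
      have h01 := hU01 a ω
      simp only [Finset.sum_insert ha, Set.mem_setOf_eq, Set.mem_union, Set.mem_inter_iff,
        Set.mem_preimage, Set.mem_singleton_iff, Finset.sum_apply]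
      omega
    have hdisj : Disjoint ((∑ i ∈ s, U i) ⁻¹' {k+1} ∩ U a ⁻¹' {0})
        ((∑ i ∈ s, U i) ⁻¹' {k} ∩ U a ⁻¹' {1}) := by
      rw [Set.disjoint_iff]
      rintro ω ⟨⟨-, h0⟩, -, h1⟩
      simp only [Set.mem_preimage, Set.mem_singleton_iff] at h0 h1
      omega
    have hm2 : MeasurableSet ((∑ i ∈ s, U i) ⁻¹' {k} ∩ U a ⁻¹' {1}) :=
      ((hTmeas s) (measurableSet_singleton k)).inter ((hUmeas a) (measurableSet_singleton 1))
    rw [hfdef, hpdef, hqdef]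
    simp only
    rw [hset, measure_union hdisj hm2, hmul s a ha, hmul s a ha,
      ENNReal.toReal_add (by finiteness) (by finiteness),
      ENNReal.toReal_mul, ENNReal.toReal_mul, ← hseteq, ← hseteq]
    have e0 : U a ⁻¹' {0} = {ω | U a ω = 0} := rfl
    have e1 : U a ⁻¹' {1} = {ω | U a ω = 1} := rfl
    rw [e0, e1]
    ring
  have main := (ulc_rec f p q hp hq hf0 hftop hbase hrec0 hrec Finset.univ).2
  have hcard : (Finset.univ : Finset (Fin n)).card = n := by
    rw [Finset.card_univ, Fintype.card_fin]
  rw [hcard] at main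
  exact main k hk1 hk2
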